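/- Let R be a commutative Noetherian local ring with maximal ideal m, let (d^{i−1}, d^i) be a complex of free modules over R with middle rank l, and let k ≥ 1 be an integer. Suppose the cohomology jump ideal J^i_{k+1} is not contained in m. If (a,b) and (a',b') are two pairs of integers with a + b = a' + b' = l − k + 2 such that I_a(d^{i−1}) + I_b(d^i) ⊆ m and I_{a'}(d^{i−1}) + I_{b'}(d^i) ⊆ m, then (a,b) = (a',b'). -/

import Mathlib

/-- The determinantal ideal `I_m(M)`: the ideal generated by the `m × m` minors of `M`,
with the convention `I_m(M) = ⊤` for `m ≤ 0`; it is automatically `0` when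
`m` exceeds the number of rows or columns of `M`. -/
def detIdeal {A : Type*} [CommRing A] {I J : Type*} (M : Matrix I J A) (m : ℤ) : Ideal A :=
  if m ≤ 0 then ⊤
  else Ideal.span {x | ∃ (r : Fin m.toNat → I) (c : Fin m.toNat → J),
    Function.Injective r ∧ Function.Injective c ∧ x = (M.submatrix r c).det}

/-- The `i`-th cohomology jump ideal `J^i_k = ⋂_{(a,b), a+b = l-k+2} (I_a(d¹) + I_b(d²))`
of a complex `A^{l´} → A^l → A^{l´´}` with middle rank `l`, parametrized by `b = l-k+2-a`. -/
def jumpIdeal {A : Type*} [CommRing A] {l l1 l2 : ℕ}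
    (d1 : Matrix (Fin l) (Fin l1) A) (d2 : Matrix (Fin l2) (Fin l) A) (k : ℤ) : Ideal A :=
  ⨅ a : ℤ, detIdeal d1 a + detIdeal d2 ((l : ℤ) - k + 2 - a)

/-- A minor of size `m+1` lies in the ideal of minors of size `m` (Laplace expansion). -/
lemma detIdeal_succ_le {A : Type*} [CommRing A] {I J : Type*} (M : Matrix I J A) (m : ℤ) :
    detIdeal M (m + 1) ≤ detIdeal M m := by
  unfold detIdeal
  split_ifs with h1 h2 h2
  · exact le_rfl
  · omega
  · exact le_top
  · rw [show (m + 1).toNat = m.toNat + 1 from by omega, Ideal.span_le]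
    rintro x ⟨r, c, hr, hc, rfl⟩
    rw [Matrix.det_succ_row_zero]
    refine Ideal.sum_mem _ fun j _ => Ideal.mul_mem_left _ _ (Ideal.subset_span ?_)
    exact ⟨r ∘ Fin.succ, c ∘ j.succAbove, hr.comp (Fin.succ_injective _),
      hc.comp (Fin.succAbove_right_injective), by rw [Matrix.submatrix_submatrix]⟩

/-- Determinantal ideals are antitone in the size. -/
lemma detIdeal_antitone {A : Type*} [CommRing A] {I J : Type*} (M : Matrix I J A)
    {m m' : ℤ} (h : m ≤ m') : detIdeal M m' ≤ detIdeal M m :=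
  Int.le_induction (motive := fun n _ => detIdeal M n ≤ detIdeal M m) le_rfl
    (fun n _ ih => (detIdeal_succ_le M n).trans ih) m' h

/-- Let `R` be a Noetherian local ring with maximal ideal `m`,
`(d1, d2)` a complex of free `R`-modules with middle rank `l`, and `k ≥ 1`.
Suppose `J^i_{k+1} ⊄ m`. If `(a, b)` and `(a', b')` are two pairs of integers with
`a + b = a' + b' = l - k + 2` such that `I_a(d1) + I_b(d2) ⊆ m` and
`I_{a'}(d1) + I_{b'}(d2) ⊆ m`, then `(a, b) = (a', b')`. -/
theorem unique_pair_of_det_ideals_in_max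
    {R : Type*} [CommRing R] [IsNoetherianRing R] [IsLocalRing R]
    {l l1 l2 : ℕ} (d1 : Matrix (Fin l) (Fin l1) R) (d2 : Matrix (Fin l2) (Fin l) R)
    (hcx : d2 * d1 = 0) (k : ℕ) (hk : 1 ≤ k)
    (hJk1 : ¬ jumpIdeal d1 d2 ((k : ℤ) + 1) ≤ IsLocalRing.maximalIdeal R)
    (a b a' b' : ℤ)
    (hab : a + b = (l : ℤ) - k + 2) (hab' : a' + b' = (l : ℤ) - k + 2)
    (h : detIdeal d1 a + detIdeal d2 b ≤ IsLocalRing.maximalIdeal R)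
    (h' : detIdeal d1 a' + detIdeal d2 b' ≤ IsLocalRing.maximalIdeal R) :
    a = a' ∧ b = b' := by
  have key : ∀ x y x' y' : ℤ, x + y = (l : ℤ) - k + 2 → x' + y' = (l : ℤ) - k + 2 →
      detIdeal d1 x + detIdeal d2 y ≤ IsLocalRing.maximalIdeal R →
      detIdeal d1 x' + detIdeal d2 y' ≤ IsLocalRing.maximalIdeal R → x' ≤ x := by
    intro x y x' y' hxy hxy' hx hx'
    by_contra hlt
    push_neg at hlt
    refine hJk1 ((iInf_le _ (x' - 1)).trans ?_)
    rw [show (l : ℤ) - ((k : ℤ) + 1) + 2 - (x' - 1) = y' from by omega,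
      Submodule.add_eq_sup]
    refine sup_le ?_ ?_
    · exact ((detIdeal_antitone d1 (by omega : x ≤ x' - 1)).trans
        ((le_sup_left.trans hx)))
    · exact le_sup_right.trans hx'
  have h1 : a' ≤ a := key a b a' b' hab hab' h h'
  have h2 : a ≤ a' := key a' b' a b hab' hab h' h
  omega
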